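/- Let K be a field containing a primitive q-th root of unity ξ_q, where q is a prime number, and let v be a valuation on K whose residue field has characteristic different from q. If b ∈ K is a q-th power in K and v(b - 1) > γ for some non-negative γ in the value group (assumed q-divisible where needed), then the map sending each q-th root a of b to the unique index j ∈ {0,…,q-1} with v(a - ξ_q^j) > γ/q is a well-defined bijection between the set {a ∈ K : a^q = b} and {0,…,q-1}. -/
import Mathlib


open Polynomial Finset

/-- **Separation of q-th roots** (Lemma on the correspondence between roots).
Let `K` be a field containing a primitive `q`-th root of unity `ξ` (`q` prime) and `v`
a valuation on `K` whose residue field has characteristic `≠ q` (expressed, in Mathlib's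
multiplicative convention, as `v q = 1`, i.e. `q` is a unit of the residue field).
Let `γ` be a non-negative `q`-divisible element of the value group — multiplicatively:
`γ ≤ 1`, `γ ≠ 0` and `γ = δ ^ q` — and let `b ∈ K` be a `q`-th power with
`v (b - 1) > γ` (multiplicatively `v (b - 1) < γ`). Then the map sending each `q`-th
root `a` of `b` to the unique `j ∈ {0,…,q-1}` with `v (a - ξ^j) > γ/q`
(multiplicatively `v (a - ξ^j) < δ`) is a well-defined bijection
`{a ∈ K : a^q = b} ≃ {0,…,q-1}`. -/
theorem stmt_0 {K : Type*} [Field K] {Γ : Type*} [LinearOrderedCommGroupWithZero Γ]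
    (v : Valuation K Γ) (q : ℕ) (hq : q.Prime)
    (hres : v (q : K) = 1)
    (ξ : K) (hξ : IsPrimitiveRoot ξ q)
    (γ δ : Γ) (hγ1 : γ ≤ 1) (hγ0 : γ ≠ 0) (hδ : δ ^ q = γ)
    (b : K) (hbq : ∃ a : K, a ^ q = b) (hb : v (b - 1) < γ) :
    ∃ J : {a : K // a ^ q = b} ≃ Fin q,
      ∀ (a : {a : K // a ^ q = b}) (j : Fin q),
        v ((a : K) - ξ ^ (j : ℕ)) < δ ↔ j = J a := by
  classical
  obtain ⟨a₀, ha₀⟩ := hbq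
  have hq0 : q ≠ 0 := hq.ne_zero
  have hqpos : 0 < q := hq.pos
  haveI : NeZero q := ⟨hq0⟩
  -- basic Γ facts
  have hpow1 : ∀ x : Γ, x ^ q = 1 → x = 1 := by
    intro x hx
    rcases lt_trichotomy x 1 with h | h | h
    · exact absurd hx (ne_of_lt (pow_lt_one₀ zero_le' h hq0))
    · exact h
    · exact absurd hx (ne_of_gt (one_lt_pow₀ h hq0))
  have hδ0 : δ ≠ 0 := fun h => hγ0 (by rw [← hδ, h, zero_pow hq0])
  have hδle : δ ≤ 1 := by
    by_contra h
    exact absurd (hδ ▸ hγ1) (not_le.mpr (one_lt_pow₀ (not_le.mp h) hq0))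
  have hvξ : v ξ = 1 := hpow1 _ (by rw [← map_pow, hξ.pow_eq_one, map_one])
  -- polynomial identity
  have hpoly : (X : K[X]) ^ q - 1 = ∏ i ∈ Finset.range q, (X - C (ξ ^ i)) := by
    have hroots : ((X : K[X]) ^ q - C 1).roots = nthRoots q (1 : K) := rfl
    have hcard : Multiset.card ((X : K[X]) ^ q - C 1).roots = ((X : K[X]) ^ q - C 1).natDegree := by
      rw [hroots, hξ.card_nthRoots, natDegree_X_pow_sub_C, if_pos ⟨1, one_pow q⟩]
    have h1 := prod_multiset_X_sub_C_of_monic_of_roots_card_eq (monic_X_pow_sub_C (1:K) hq0) hcard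
    rw [hroots, hξ.nthRoots_eq (one_pow q), map_one] at h1
    rw [← h1, Multiset.map_map, Finset.prod_eq_multiset_prod, Finset.range_val]
    simp [Function.comp_def]
  have hfact : ∀ x : K, x ^ q - 1 = ∏ i ∈ Finset.range q, (x - ξ ^ i) := by
    intro x
    have := congrArg (Polynomial.eval x) hpoly
    simpa [Polynomial.eval_prod] using this
  -- q = ∏_{0<i<q} (1 - ξ^i)
  have hqval : ∏ i ∈ (Finset.range q).erase 0, (1 - ξ ^ i) = (q : K) := by
    have hsplit : (X : K[X]) ^ q - 1
        = (X - 1) * ∏ i ∈ (Finset.range q).erase 0, (X - C (ξ ^ i)) := by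
      rw [hpoly, ← Finset.mul_prod_erase _ _ (Finset.mem_range.mpr hqpos)]
      simp
    have hne : (X : K[X]) - 1 ≠ 0 := by
      have := X_sub_C_ne_zero (1 : K)
      simpa using this
    have hcancel : (∑ i ∈ Finset.range q, (X : K[X]) ^ i)
        = ∏ i ∈ (Finset.range q).erase 0, (X - C (ξ ^ i)) := by
      apply mul_right_cancel₀ hne
      rw [geom_sum_mul, hsplit, mul_comm]
    have := congrArg (Polynomial.eval 1) hcancel
    simpa [Polynomial.eval_prod, Polynomial.eval_finset_sum] using this.symm
  -- valuation of 1 - ξ^i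
  have hle1 : ∀ i : ℕ, v (1 - ξ ^ i) ≤ 1 := by
    intro i
    refine le_trans (v.map_sub _ _) ?_
    rw [map_one, map_pow, hvξ, one_pow, max_self]
  have hvone : ∀ i ∈ (Finset.range q).erase 0, v (1 - ξ ^ i) = 1 := by
    intro i hi
    have hprod1 : ∏ k ∈ (Finset.range q).erase 0, v (1 - ξ ^ k) = 1 := by
      rw [← map_prod, hqval, hres]
    refine le_antisymm (hle1 i) ?_
    calc (1 : Γ) = ∏ k ∈ (Finset.range q).erase 0, v (1 - ξ ^ k) := hprod1.symm
      _ = v (1 - ξ ^ i) * ∏ k ∈ ((Finset.range q).erase 0).erase i, v (1 - ξ ^ k) :=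
          (Finset.mul_prod_erase _ _ hi).symm
      _ ≤ v (1 - ξ ^ i) * 1 := mul_le_mul_right (Finset.prod_le_one' fun k _ => hle1 k) _
      _ = v (1 - ξ ^ i) := mul_one _
  have hsep : ∀ i j : ℕ, i < q → j < q → i ≠ j → v (ξ ^ i - ξ ^ j) = 1 := by
    have key : ∀ i j : ℕ, j < i → i < q → v (ξ ^ i - ξ ^ j) = 1 := by
      intro i j hji hiq
      have heq : ξ ^ i - ξ ^ j = ξ ^ j * (ξ ^ (i - j) - 1) := by
        rw [mul_sub, mul_one, ← pow_add]
        congr 2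
        omega
      rw [heq, v.map_mul, map_pow, hvξ, one_pow, one_mul, v.map_sub_swap]
      exact hvone _ (Finset.mem_erase.mpr ⟨by omega, Finset.mem_range.mpr (by omega)⟩)
    intro i j hi hj hij
    rcases lt_or_gt_of_ne hij with h | h
    · rw [v.map_sub_swap]; exact key j i h hj
    · exact key i j h hi
  -- valuation of b and roots
  have hvb : v b = 1 := by
    have h1 : v (b - 1) < v 1 := by rw [map_one]; exact lt_of_lt_of_le hb hγ1
    have := Valuation.map_add_eq_of_lt_right v h1
    simpa using this
  have hb0 : b ≠ 0 := fun h => by simp [h] at hvb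
  have hva : ∀ a : K, a ^ q = b → v a = 1 := fun a ha =>
    hpow1 _ (by rw [← map_pow, ha, hvb])
  -- existence of j
  have hex : ∀ a : K, a ^ q = b → ∃ j : Fin q, v (a - ξ ^ (j : ℕ)) < δ := by
    intro a ha
    by_contra hcon
    push_neg at hcon
    have h1 : δ ^ q ≤ ∏ i ∈ Finset.range q, v (a - ξ ^ i) := by
      calc δ ^ q = ∏ _i ∈ Finset.range q, δ := by rw [Finset.prod_const, Finset.card_range]
        _ ≤ ∏ i ∈ Finset.range q, v (a - ξ ^ i) :=
            Finset.prod_le_prod' fun i hi => hcon ⟨i, Finset.mem_range.mp hi⟩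
    have h2 : ∏ i ∈ Finset.range q, v (a - ξ ^ i) = v (b - 1) := by
      rw [← map_prod, ← hfact a, ha]
    rw [h2, hδ] at h1
    exact absurd hb (not_lt.mpr h1)
  have hf2 : ∀ (a : K) (j₁ j₂ : Fin q), v (a - ξ ^ (j₁ : ℕ)) < δ → v (a - ξ ^ (j₂ : ℕ)) < δ →
      j₁ = j₂ := by
    intro a j₁ j₂ h1 h2
    by_contra hne
    have hs : v (ξ ^ (j₂ : ℕ) - ξ ^ (j₁ : ℕ)) = 1 :=
      hsep _ _ j₂.isLt j₁.isLt (fun h => hne (Fin.ext h).symm)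
    have : v (ξ ^ (j₂ : ℕ) - ξ ^ (j₁ : ℕ)) < δ := by
      have heq : ξ ^ (j₂ : ℕ) - ξ ^ (j₁ : ℕ) = (a - ξ ^ (j₁ : ℕ)) - (a - ξ ^ (j₂ : ℕ)) := by ring
      rw [heq]
      exact lt_of_le_of_lt (v.map_sub _ _) (max_lt h1 h2)
    rw [hs] at this
    exact absurd hδle (not_le.mpr this)
  -- injectivity across distinct roots
  have hinj : ∀ a₁ a₂ : K, a₁ ^ q = b → a₂ ^ q = b → ∀ j : Fin q,
      v (a₁ - ξ ^ (j : ℕ)) < δ → v (a₂ - ξ ^ (j : ℕ)) < δ → a₁ = a₂ := by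
    intro a₁ a₂ h1 h2 j hj1 hj2
    by_contra hne
    have ha₂0 : a₂ ≠ 0 := fun h => hb0 (by rw [← h2, h, zero_pow hq0])
    have hdiv : (a₁ / a₂) ^ q = 1 := by rw [div_pow, h1, h2, div_self hb0]
    obtain ⟨k, hkq, hk⟩ := hξ.eq_pow_of_pow_eq_one hdiv
    have hk0 : k ≠ 0 := by
      intro h
      rw [h, pow_zero] at hk
      exact hne ((div_eq_one_iff_eq ha₂0).mp hk.symm)
    rw [eq_div_iff ha₂0] at hk
    have heq : a₁ - a₂ = a₂ * (ξ ^ k - 1) := by rw [← hk]; ring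
    have hv1 : v (a₁ - a₂) = 1 := by
      rw [heq, v.map_mul, hva a₂ h2, one_mul, v.map_sub_swap]
      exact hvone k (Finset.mem_erase.mpr ⟨hk0, Finset.mem_range.mpr hkq⟩)
    have hvlt : v (a₁ - a₂) < δ := by
      have h3 : a₁ - a₂ = (a₁ - ξ ^ (j : ℕ)) - (a₂ - ξ ^ (j : ℕ)) := by ring
      rw [h3]
      exact lt_of_le_of_lt (v.map_sub _ _) (max_lt hj1 hj2)
    rw [hv1] at hvlt
    exact absurd hδle (not_le.mpr hvlt)
  -- the equivalence Fin q ≃ roots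
  have ha₀0 : a₀ ≠ 0 := fun h => hb0 (by rw [← ha₀, h, zero_pow hq0])
  let g : Fin q → {a : K // a ^ q = b} := fun j =>
    ⟨ξ ^ (j : ℕ) * a₀, by
      rw [mul_pow, ← pow_mul, mul_comm (j : ℕ) q, pow_mul, hξ.pow_eq_one, one_pow, one_mul, ha₀]⟩
  have hgbij : Function.Bijective g := by
    constructor
    · intro i j hij
      have : ξ ^ (i : ℕ) * a₀ = ξ ^ (j : ℕ) * a₀ := congrArg Subtype.val hij
      exact Fin.ext (hξ.pow_inj i.isLt j.isLt (mul_right_cancel₀ ha₀0 this))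
    · intro a
      have hdiv : ((a : K) / a₀) ^ q = 1 := by rw [div_pow, a.2, ha₀, div_self hb0]
      obtain ⟨i, hiq, hi⟩ := hξ.eq_pow_of_pow_eq_one hdiv
      exact ⟨⟨i, hiq⟩, Subtype.ext (by simp only [g]; rw [hi, div_mul_cancel₀ _ ha₀0])⟩
  haveI : Fintype {a : K // a ^ q = b} := Fintype.ofBijective g hgbij
  have hcardR : Fintype.card {a : K // a ^ q = b} = q := by
    have h := Fintype.card_of_bijective hgbij
    rw [Fintype.card_fin] at h
    exact h.symm
  -- the map to Fin q
  let f : {a : K // a ^ q = b} → Fin q := fun a => (hex (a : K) a.2).choose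
  have hf : ∀ a : {a : K // a ^ q = b}, v ((a : K) - ξ ^ ((f a : Fin q) : ℕ)) < δ :=
    fun a => (hex (a : K) a.2).choose_spec
  have hfinj : Function.Injective f := by
    intro a₁ a₂ h
    have h2 : v ((a₂ : K) - ξ ^ ((f a₁ : Fin q) : ℕ)) < δ := by rw [h]; exact hf a₂
    exact Subtype.ext (hinj _ _ a₁.2 a₂.2 (f a₁) (hf a₁) h2)
  have hfbij : Function.Bijective f :=
    (Fintype.bijective_iff_injective_and_card f).mpr ⟨hfinj, by rw [hcardR, Fintype.card_fin]⟩
  refine ⟨Equiv.ofBijective f hfbij, ?_⟩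
  intro a j
  constructor
  · intro h
    exact hf2 (a : K) j (f a) h (hf a)
  · intro h
    rw [h]
    exact hf a
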